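/- Let m: [a,b) → ℝ be C¹ on (a,b) and continuous at a, satisfying m'(t) ≥ −η·m(t) − ρ·γ·m(t) on any interval where d²(t) ≤ γ·m(t), where d is continuous with d(a) = 0 and the stopping rule guarantees d²(t) ≤ γm(t) up to the first crossing. If m(a) > 0, then m(t) > 0 and d²(t) ≤ γ·m(t) for all t ∈ [a, b), where b is the first time d²(t) > γm(t) would occur. -/

import Mathlib

/-- Between consecutive events, `m` stays positive and `d² ≤ γ m`. -/
theorem event_trigger_positivity (η γ ρ : ℝ) (hη : 0 < η) (hγ : 0 < γ) (hρ : 0 < ρ)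
    (a b : ℝ) (hab : a < b) (d m g : ℝ → ℝ)
    (hd_cont : ContinuousOn d (Set.Ico a b)) (hda : d a = 0)
    (hm_cont : ContinuousOn m (Set.Ico a b))
    (hm_ode : ∀ t ∈ Set.Ioo a b,
      HasDerivAt m (-η * m t - ρ * d t ^ 2 + g t) t)
    (hg : ∀ t ∈ Set.Ioo a b, 0 ≤ g t)
    (hma : 0 < m a)
    -- `b` is no later than the first time the triggering condition `d² > γ m` occurs:
    (hfirst : ∀ t : ℝ, a ≤ t → t < b → d t ^ 2 ≤ γ * m t) :
    ∀ t : ℝ, a ≤ t → t < b → 0 < m t ∧ d t ^ 2 ≤ γ * m t := by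
  intro t hat htb
  refine ⟨?_, hfirst t hat htb⟩
  set c : ℝ := η + ρ * γ with hc
  set f : ℝ → ℝ := fun s => m s * Real.exp (c * (s - a)) with hf
  have hfc : ContinuousOn f (Set.Ico a b) := by
    apply hm_cont.mul
    exact (Real.continuous_exp.comp ((continuous_const.mul
      (continuous_id.sub continuous_const)))).continuousOn
  have hderiv : ∀ s ∈ Set.Ioo a b,
      HasDerivAt f ((-η * m s - ρ * d s ^ 2 + g s + c * m s) * Real.exp (c * (s - a))) s := by
    intro s hs
    have he : HasDerivAt (fun u => Real.exp (c * (u - a))) (c * Real.exp (c * (s - a))) s := by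
      have h1 : HasDerivAt (fun u : ℝ => c * (u - a)) c s := by
        simpa using ((hasDerivAt_id s).sub_const a).const_mul c
      exact ((Real.hasDerivAt_exp (c * (s - a))).comp s h1).congr_deriv (mul_comm _ _)
    have : HasDerivAt (fun y => m y * Real.exp (c * (y - a))) _ s := (hm_ode s hs).mul he
    convert this using 1
    ring
  have hmono : MonotoneOn f (Set.Ico a b) := by
    apply monotoneOn_of_deriv_nonneg (convex_Ico a b) hfc
    · intro s hs
      rw [interior_Ico] at hs
      exact (hderiv s hs).differentiableAt.differentiableWithinAt
    · intro s hs
      rw [interior_Ico] at hs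
      rw [(hderiv s hs).deriv]
      apply mul_nonneg _ (Real.exp_pos _).le
      have h1 : d s ^ 2 ≤ γ * m s := hfirst s hs.1.le hs.2
      have h2 : ρ * d s ^ 2 ≤ ρ * (γ * m s) := by
        exact mul_le_mul_of_nonneg_left h1 hρ.le
      have h3 := hg s hs
      nlinarith
  have hfa : f a = m a := by simp [hf]
  have : f a ≤ f t := hmono ⟨le_refl a, hab⟩ ⟨hat, htb⟩ hat
  have hft : 0 < f t := by rw [hfa] at this; linarith
  have := mul_pos hft (Real.exp_pos (-(c * (t - a))))
  simpa [hf, mul_assoc, ← Real.exp_add] using this
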